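/- Under the hypotheses of the objective-collapse theorem, the regularisation term vanishes in the limit: γ·KL(q_γ ‖ π) → 0 as γ → 0, where q_γ minimises J_γ(q) = E_q[L] + γ·KL(q‖π). -/

import Mathlib

open MeasureTheory ProbabilityTheory Filter
open scoped ENNReal

/-- Kullback–Leibler divergence `KL(q‖π) = ∫ log (dq/dπ) dq` (for `q ≪ π`). -/
noncomputable def KL {Θ : Type*} [MeasurableSpace Θ] (q π : Measure Θ) : ℝ :=
  ∫ θ, llr q π θ ∂q

/-- The SoU / Gibbs objective `J_γ(q) = E_q[L] + γ·KL(q‖π)`. -/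
noncomputable def Jobj {Θ : Type*} [MeasurableSpace Θ] (L : Θ → ℝ) (π : Measure Θ)
    (γ : ℝ) (q : Measure Θ) : ℝ :=
  ∫ θ, L θ ∂q + γ * KL q π

lemma KL_nonneg {Θ : Type*} [MeasurableSpace Θ] (q π : Measure Θ)
    [IsProbabilityMeasure q] [IsProbabilityMeasure π] (hqp : q ≪ π)
    (hint : Integrable (llr q π) q) : 0 ≤ KL q π := by
  have hneg : (-llr q π) =ᵐ[q] llr π q := neg_llr hqp
  have hint' : Integrable (llr π q) q := hint.neg.congr hneg
  have hbound : ∀ᵐ x ∂q, llr π q x ≤ (π.rnDeriv q x).toReal - 1 := by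
    filter_upwards [Measure.rnDeriv_pos' hqp, Measure.rnDeriv_lt_top π q] with x hpos hlt
    have h0 : 0 < (π.rnDeriv q x).toReal := ENNReal.toReal_pos hpos.ne' hlt.ne
    exact Real.log_le_sub_one_of_pos h0
  have hintr : Integrable (fun x => (π.rnDeriv q x).toReal - 1) q :=
    Measure.integrable_toReal_rnDeriv.sub (integrable_const 1)
  have h1 : ∫ x, llr π q x ∂q ≤ ∫ x, ((π.rnDeriv q x).toReal - 1) ∂q :=
    integral_mono_ae hint' hintr hbound
  have h2 : ∫ x, ((π.rnDeriv q x).toReal - 1) ∂q ≤ 0 := by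
    rw [integral_sub Measure.integrable_toReal_rnDeriv (integrable_const 1),
      integral_const]
    have h3 : ∫ x, (π.rnDeriv q x).toReal ∂q ≤ (π Set.univ).toReal := by
      have := Measure.setIntegral_toReal_rnDeriv_le (ν := q) (μ := π)
        (s := Set.univ) (measure_ne_top π Set.univ)
      rwa [setIntegral_univ] at this
    simp only [measure_univ, probReal_univ, ENNReal.toReal_one, smul_eq_mul, mul_one, one_mul] at h3 ⊢
    linarith
  have h4 : ∫ x, llr π q x ∂q = - KL q π := by
    rw [KL, ← integral_neg]
    exact (integral_congr_ae hneg).symm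
  linarith [h1.trans h2, h4]

/-- Objective collapse, part 4: the weighted regularisation term vanishes,
`γ·KL(q_γ‖π) → 0` as `γ → 0`. -/
theorem objective_collapse_kl {Θ : Type*} [MeasurableSpace Θ]
    (π : Measure Θ) [IsProbabilityMeasure π]
    (L : Θ → ℝ) (hL : Measurable L)
    (Lstar : ℝ) (hglb : IsGLB (Set.range L) Lstar)
    (hπ : ∀ δ : ℝ, 0 < δ → 0 < π {θ | L θ ≤ Lstar + δ})
    (γ : ℕ → ℝ) (hγpos : ∀ m, 0 < γ m) (hγ0 : Tendsto γ atTop (nhds 0))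
    (q : ℕ → Measure Θ) (hqprob : ∀ m, IsProbabilityMeasure (q m))
    (hqac : ∀ m, q m ≪ π)
    (hqint : ∀ m, Integrable L (q m)) (hqllr : ∀ m, Integrable (llr (q m) π) (q m))
    (hmin : ∀ m, ∀ q' : Measure Θ, IsProbabilityMeasure q' → q' ≪ π →
      Jobj L π (γ m) (q m) ≤ Jobj L π (γ m) q') :
    Tendsto (fun m => γ m * KL (q m) π) atTop (nhds 0) := by
  rw [Metric.tendsto_atTop]
  intro ε hε
  set δ : ℝ := ε / 2 with hδdef
  have hδ : 0 < δ := by positivity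
  set S : Set Θ := {θ | L θ ≤ Lstar + δ} with hSdef
  have hSm : MeasurableSet S := hL measurableSet_Iic
  have hπS : 0 < π S := hπ δ hδ
  have hπSne : π S ≠ 0 := hπS.ne'
  have hπStop : π S ≠ ⊤ := measure_ne_top π S
  set c : ℝ≥0∞ := (π S)⁻¹ with hcdef
  set q' : Measure Θ := c • π.restrict S with hq'def
  have hq'univ : q' Set.univ = 1 := by
    rw [hq'def]
    simp only [Measure.smul_apply, smul_eq_mul, Measure.restrict_apply_univ]
    exact ENNReal.inv_mul_cancel hπSne hπStop
  have hq'prob : IsProbabilityMeasure q' := ⟨hq'univ⟩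
  have hq'ac : q' ≪ π :=
    (Measure.absolutelyContinuous_of_le Measure.restrict_le_self).smul_left c
  -- q' is a withDensity measure
  have hq'wd : q' = π.withDensity (fun θ => c • S.indicator (1 : Θ → ℝ≥0∞) θ) := by
    rw [hq'def, ← withDensity_indicator_one hSm, ← withDensity_smul c (measurable_one.indicator hSm)]
    rfl
  have hmeasf : Measurable (fun θ => c • S.indicator (1 : Θ → ℝ≥0∞) θ) :=
    (measurable_one.indicator hSm).const_smul c
  have hrn : q'.rnDeriv π =ᵐ[π] fun θ => c • S.indicator (1 : Θ → ℝ≥0∞) θ := by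
    rw [hq'wd]; exact Measure.rnDeriv_withDensity π hmeasf
  have hq'S : ∀ᵐ θ ∂q', θ ∈ S := by
    have : q' Sᶜ = 0 := by
      rw [hq'def]
      simp [Measure.restrict_apply hSm.compl]
    exact ae_iff.mpr this
  set C : ℝ := - Real.log (π S).toReal with hCdef
  have hC0 : 0 ≤ C := by
    rw [hCdef, neg_nonneg]
    apply Real.log_nonpos ENNReal.toReal_nonneg
    calc (π S).toReal ≤ (1 : ℝ≥0∞).toReal :=
          ENNReal.toReal_mono (by simp) prob_le_one
      _ = 1 := by simp
  have hllr : llr q' π =ᵐ[q'] fun _ => C := by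
    filter_upwards [hq'ac.ae_le hrn, hq'S] with θ hθ hθS
    rw [llr, hθ]
    simp only [Set.indicator_of_mem hθS, Pi.one_apply, smul_eq_mul, mul_one, hcdef]
    rw [ENNReal.toReal_inv, Real.log_inv]
  have hKLq' : KL q' π = C := by
    rw [KL, integral_congr_ae hllr, integral_const, probReal_univ]
    simp
  -- integral of L against q'
  have hbnd : ∀ᵐ θ ∂q', ‖L θ‖ ≤ max |Lstar| |Lstar + δ| := by
    filter_upwards [hq'S] with θ hθS
    have hlo : Lstar ≤ L θ := hglb.1 (Set.mem_range_self θ)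
    exact abs_le_max_abs_abs hlo hθS
  have hLint' : Integrable L q' :=
    Integrable.mono' (integrable_const _) hL.aestronglyMeasurable hbnd
  have hLq' : ∫ θ, L θ ∂q' ≤ Lstar + δ := by
    have h := integral_mono_ae hLint' (integrable_const (Lstar + δ))
      (by filter_upwards [hq'S] with θ hθS using hθS)
    rwa [integral_const, probReal_univ, one_smul] at h
  -- main bound for every m
  have key : ∀ m, γ m * KL (q m) π ≤ δ + γ m * C := by
    intro m
    haveI := hqprob m
    have hmin' := hmin m q' hq'prob hq'ac
    have hLqm : Lstar ≤ ∫ θ, L θ ∂(q m) := by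
      have h := integral_mono (integrable_const Lstar) (hqint m)
        (fun θ => hglb.1 (Set.mem_range_self θ))
      rwa [integral_const, probReal_univ, one_smul] at h
    rw [Jobj, Jobj, hKLq'] at hmin'
    linarith
  -- eventually γ m * C < ε / 2
  have htend : Tendsto (fun m => γ m * C) atTop (nhds 0) := by
    simpa using hγ0.mul_const C
  rw [Metric.tendsto_atTop] at htend
  obtain ⟨N, hN⟩ := htend (ε / 2) (by positivity)
  refine ⟨N, fun m hm => ?_⟩
  haveI := hqprob m
  have hKL0 : 0 ≤ KL (q m) π := KL_nonneg (q m) π (hqac m) (hqllr m)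
  have h1 : 0 ≤ γ m * KL (q m) π := mul_nonneg (hγpos m).le hKL0
  have h2 : γ m * C < ε / 2 := by
    have := hN m hm
    rw [Real.dist_eq, sub_zero] at this
    exact (le_abs_self _).trans_lt this
  rw [Real.dist_eq, sub_zero, abs_of_nonneg h1]
  calc γ m * KL (q m) π ≤ δ + γ m * C := key m
    _ < ε / 2 + ε / 2 := by rw [hδdef]; linarith
    _ = ε := by ring
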